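/- For n ≥ 1, the number of matchings on [2n] with sock number exactly n−1 equals (n−1)^2·(n−1)!. -/

import Mathlib

open Finset
open scoped Classical

/-- An `r`-matching on `[r*n] = {1,...,r*n}`: a partition of `Finset.Icc 1 (r*n)`
into `r`-element blocks. -/
def IsRMatching (r n : ℕ) (M : Finset (Finset ℕ)) : Prop :=
  (∀ e ∈ M, e.card = r) ∧
  (∀ e ∈ M, ∀ f ∈ M, e ≠ f → Disjoint e f) ∧
  M.biUnion id = Finset.Icc 1 (r * n)

/-- The finite set of all `r`-matchings on `[r*n]`. -/
noncomputable def matchings (r n : ℕ) : Finset (Finset (Finset ℕ)) :=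
  ((Finset.Icc 1 (r * n)).powerset.powerset).filter (IsRMatching r n)

/-- `x_k(M) = Σ_{e ∈ M_k} |e ∩ [k]|`, summed over blocks `e` meeting both `[k]`
and its complement. -/
noncomputable def sockAt (k : ℕ) (M : Finset (Finset ℕ)) : ℕ :=
  ∑ e ∈ M.filter
      (fun e => (e ∩ Finset.Icc 1 k).Nonempty ∧ (e \ Finset.Icc 1 k).Nonempty),
    (e ∩ Finset.Icc 1 k).card

/-- For `r = 2`: the number of edges with one endpoint in `[k]` and one outside. -/
noncomputable def crossAt (k : ℕ) (M : Finset (Finset ℕ)) : ℕ :=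
  (M.filter
      (fun e => (e ∩ Finset.Icc 1 k).Nonempty ∧ (e \ Finset.Icc 1 k).Nonempty)).card

/-- The sock number of a matching on `[2n]`: `max_{1 ≤ k ≤ 2n} x_k(M)`. -/
noncomputable def sockNum (n : ℕ) (M : Finset (Finset ℕ)) : ℕ :=
  (Finset.Icc 1 (2 * n)).sup (fun k => crossAt k M)

/-- A pairing between `L` and `R`: partition of `L ∪ R` into pairs, one endpoint in each. -/
def IsPairing (L R : Finset ℕ) (M : Finset (Finset ℕ)) : Prop :=
  (∀ e ∈ M, ∃ a ∈ L, ∃ b ∈ R, e = {a, b}) ∧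
  (∀ e ∈ M, ∀ f ∈ M, e ≠ f → Disjoint e f) ∧
  M.biUnion id = L ∪ R

noncomputable def pairings (L R : Finset ℕ) : Finset (Finset (Finset ℕ)) :=
  ((L ∪ R).powerset.powerset).filter (IsPairing L R)

lemma mem_pairings {L R : Finset ℕ} {M : Finset (Finset ℕ)} :
    M ∈ pairings L R ↔ IsPairing L R M := by
  constructor
  · intro h; exact (mem_filter.1 h).2
  · intro h
    refine mem_filter.2 ⟨mem_powerset.2 ?_, h⟩
    intro e he
    refine mem_powerset.2 ?_
    intro x hx
    rw [← h.2.2]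
    exact mem_biUnion.2 ⟨e, he, hx⟩

lemma pairings_card : ∀ (m : ℕ) (L R : Finset ℕ), Disjoint L R → L.card = m → R.card = m →
    (pairings L R).card = m.factorial := by
  intro m
  induction m with
  | zero =>
    intro L R _ hL hR
    rw [card_eq_zero] at hL hR
    subst hL; subst hR
    have : pairings ∅ ∅ = {∅} := by
      ext M
      simp only [mem_pairings, mem_singleton, IsPairing]
      constructor
      · rintro ⟨h1, _, h3⟩
        by_contra hne
        obtain ⟨e, he⟩ := nonempty_iff_ne_empty.2 hne
        obtain ⟨a, ha, _⟩ := h1 e he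
        exact absurd ha (notMem_empty a)
      · rintro rfl
        refine ⟨by simp, by simp, by simp⟩
    rw [this]; simp
  | succ m ih =>
    intro L R hdisj hL hR
    have hLne : L.Nonempty := card_pos.1 (by omega)
    obtain ⟨a, ha⟩ := hLne
    have key : pairings L R = R.biUnion (fun b =>
        (pairings (L.erase a) (R.erase b)).image (insert ({a, b} : Finset ℕ))) := by
      ext M
      simp only [mem_biUnion, mem_image]
      constructor
      · intro hM
        obtain ⟨h1, h2, h3⟩ := mem_pairings.1 hM
        have haU : a ∈ M.biUnion id := by rw [h3]; exact mem_union_left _ ha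
        obtain ⟨e, he, hae⟩ := mem_biUnion.1 haU
        obtain ⟨a', ha', b, hb, rfl⟩ := h1 e he
        have hab : a = a' := by
          rcases mem_insert.1 hae with h | h
          · exact h
          · exfalso; rw [mem_singleton.1 h] at ha
            exact (disjoint_left.1 hdisj) ha hb
        subst hab
        refine ⟨b, hb, M.erase {a, b}, ?_, ?_⟩
        · rw [mem_pairings]
          refine ⟨?_, ?_, ?_⟩
          · intro f hf
            have hfM := mem_of_mem_erase hf
            obtain ⟨a'', ha'', b'', hb'', rfl⟩ := h1 f hfM
            have hfne : ({a'', b''} : Finset ℕ) ≠ {a, b} := ne_of_mem_erase hf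
            refine ⟨a'', mem_erase.2 ⟨?_, ha''⟩, b'', mem_erase.2 ⟨?_, hb''⟩, rfl⟩
            · rintro rfl
              exact (disjoint_left.1 (h2 _ hfM _ he hfne)) (mem_insert_self _ _) (mem_insert_self _ _)
            · rintro rfl
              exact (disjoint_left.1 (h2 _ hfM _ he hfne))
                (mem_insert_of_mem (mem_singleton_self _)) (mem_insert_of_mem (mem_singleton_self _))
          · intro f hf g hg hfg
            exact h2 _ (mem_of_mem_erase hf) _ (mem_of_mem_erase hg) hfg
          · ext x
            constructor
            · intro hmem
              obtain ⟨f, hf, hxf⟩ := mem_biUnion.1 hmem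
              obtain ⟨hfne, hfM⟩ := mem_erase.1 hf
              simp only [id] at hxf
              have hx : x ∈ L ∪ R := by rw [← h3]; exact mem_biUnion.2 ⟨f, hfM, hxf⟩
              have hxe : x ∉ ({a, b} : Finset ℕ) :=
                fun hxe => (disjoint_left.1 (h2 _ hfM _ he hfne)) hxf hxe
              simp only [mem_insert, mem_singleton] at hxe
              push_neg at hxe
              rcases mem_union.1 hx with h | h
              · exact mem_union_left _ (mem_erase.2 ⟨hxe.1, h⟩)
              · exact mem_union_right _ (mem_erase.2 ⟨hxe.2, h⟩)
            · intro hmem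
              rcases mem_union.1 hmem with h | h
              · obtain ⟨hxa, hxL⟩ := mem_erase.1 h
                have hx : x ∈ M.biUnion id := by rw [h3]; exact mem_union_left _ hxL
                obtain ⟨f, hf, hxf⟩ := mem_biUnion.1 hx
                simp only [id] at hxf
                refine mem_biUnion.2 ⟨f, mem_erase.2 ⟨?_, hf⟩, hxf⟩
                rintro rfl
                rcases mem_insert.1 hxf with rfl | hxf2
                · exact hxa rfl
                · rw [mem_singleton] at hxf2; subst hxf2
                  exact (disjoint_left.1 hdisj) hxL hb
              · obtain ⟨hxb, hxR⟩ := mem_erase.1 h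
                have hx : x ∈ M.biUnion id := by rw [h3]; exact mem_union_right _ hxR
                obtain ⟨f, hf, hxf⟩ := mem_biUnion.1 hx
                simp only [id] at hxf
                refine mem_biUnion.2 ⟨f, mem_erase.2 ⟨?_, hf⟩, hxf⟩
                rintro rfl
                rcases mem_insert.1 hxf with rfl | hxf2
                · exact (disjoint_left.1 hdisj) ha hxR
                · rw [mem_singleton] at hxf2; subst hxf2
                  exact hxb rfl
        · exact insert_erase he
      · rintro ⟨b, hb, M0, hM0, rfl⟩
        obtain ⟨h1, h2, h3⟩ := mem_pairings.1 hM0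
        have habnotin : ∀ f ∈ M0, Disjoint ({a, b} : Finset ℕ) f := by
          intro f hf
          obtain ⟨a', ha', b', hb', rfl⟩ := h1 f hf
          have ha'2 := mem_erase.1 ha'
          have hb'2 := mem_erase.1 hb'
          simp only [disjoint_left, mem_insert, mem_singleton]
          rintro x (rfl | rfl) hx
          · rcases hx with rfl | rfl
            · exact ha'2.1 rfl
            · exact (disjoint_left.1 hdisj) ha hb'2.2
          · rcases hx with rfl | rfl
            · exact (disjoint_left.1 hdisj) ha'2.2 hb
            · exact hb'2.1 rfl
        rw [mem_pairings]
        refine ⟨?_, ?_, ?_⟩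
        · intro f hf
          rcases mem_insert.1 hf with rfl | hf
          · exact ⟨a, ha, b, hb, rfl⟩
          · obtain ⟨a', ha', b', hb', rfl⟩ := h1 f hf
            exact ⟨a', mem_of_mem_erase ha', b', mem_of_mem_erase hb', rfl⟩
        · intro f hf g hg hfg
          rcases mem_insert.1 hf with rfl | hf <;> rcases mem_insert.1 hg with rfl | hg
          · exact absurd rfl hfg
          · exact habnotin g hg
          · exact (habnotin f hf).symm
          · exact h2 f hf g hg hfg
        · rw [biUnion_insert, h3, id]
          ext x
          simp only [mem_union, mem_insert, mem_singleton, mem_erase]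
          constructor
          · rintro (( rfl | rfl) | ⟨_, h⟩ | ⟨_, h⟩)
            · exact Or.inl ha
            · exact Or.inr hb
            · exact Or.inl h
            · exact Or.inr h
          · rintro (h | h)
            · by_cases hxa : x = a
              · exact Or.inl (Or.inl hxa)
              · exact Or.inr (Or.inl ⟨hxa, h⟩)
            · by_cases hxb : x = b
              · exact Or.inl (Or.inr hxb)
              · exact Or.inr (Or.inr ⟨hxb, h⟩)
    rw [key, card_biUnion]
    · have : ∀ b ∈ R, ((pairings (L.erase a) (R.erase b)).image
          (insert ({a, b} : Finset ℕ))).card = m.factorial := by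
        intro b hb
        rw [card_image_of_injOn, ih (L.erase a) (R.erase b)
          (hdisj.mono (erase_subset _ _) (erase_subset _ _))
          (by rw [card_erase_of_mem ha, hL]; omega) (by rw [card_erase_of_mem hb, hR]; omega)]
        intro M1 hM1 M2 hM2 heq
        have hnotin : ∀ M0 ∈ pairings (L.erase a) (R.erase b), ({a, b} : Finset ℕ) ∉ M0 := by
          intro M0 hM0 hmem
          obtain ⟨a', ha', _, _, habeq⟩ := (mem_pairings.1 hM0).1 _ hmem
          have : a' ∈ ({a, b} : Finset ℕ) := habeq ▸ mem_insert_self _ _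
          rcases mem_insert.1 this with rfl | h
          · exact (mem_erase.1 ha').1 rfl
          · rw [mem_singleton] at h; subst h
            exact (disjoint_left.1 hdisj) (mem_of_mem_erase ha') hb
        simp only [mem_coe] at hM1 hM2
        have := congrArg (Finset.erase · ({a,b} : Finset ℕ)) heq
        simpa [erase_insert (hnotin _ hM1), erase_insert (hnotin _ hM2)] using this
      rw [sum_congr rfl this, sum_const, hR, Nat.factorial_succ, smul_eq_mul]
    · intro b1 hb1 b2 hb2 hne
      simp only [disjoint_left, mem_image]
      rintro M ⟨M1, hM1, rfl⟩ ⟨M2, hM2, heq⟩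
      have h1 : ({a, b1} : Finset ℕ) ∈ insert ({a, b1} : Finset ℕ) M1 := mem_insert_self _ _
      have h2 : ({a, b2} : Finset ℕ) ∈ insert ({a, b1} : Finset ℕ) M1 := by
        rw [← heq] at h1 ⊢
        exact mem_insert_self _ _
      have hMp : IsPairing L R (insert ({a,b1} : Finset ℕ) M1) := by
        have : insert ({a,b1} : Finset ℕ) M1 ∈ pairings L R := by
          rw [key]
          exact mem_biUnion.2 ⟨b1, hb1, mem_image_of_mem _ hM1⟩
        exact mem_pairings.1 this
      have hne2 : ({a, b1} : Finset ℕ) ≠ {a, b2} := by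
        intro h
        have : b2 ∈ ({a, b1} : Finset ℕ) := h ▸ mem_insert_of_mem (mem_singleton_self _)
        rcases mem_insert.1 this with rfl | hh
        · exact (disjoint_left.1 hdisj) ha hb2
        · exact hne (mem_singleton.1 hh).symm
      have := hMp.2.1 _ h1 _ h2 hne2
      exact (disjoint_left.1 this) (mem_insert_self _ _) (mem_insert_self _ _)

lemma mem_matchings {r n : ℕ} {M : Finset (Finset ℕ)} :
    M ∈ matchings r n ↔ IsRMatching r n M := by
  constructor
  · intro h; exact (mem_filter.1 h).2
  · intro h
    refine mem_filter.2 ⟨mem_powerset.2 ?_, h⟩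
    intro e he
    refine mem_powerset.2 ?_
    intro x hx
    rw [← h.2.2]
    exact mem_biUnion.2 ⟨e, he, hx⟩

section Basic
variable {n : ℕ} {M : Finset (Finset ℕ)} (hM : IsRMatching 2 n M)
include hM

lemma edge_subset {e : Finset ℕ} (he : e ∈ M) : e ⊆ Finset.Icc 1 (2 * n) := by
  intro x hx
  rw [← hM.2.2]
  exact mem_biUnion.2 ⟨e, he, hx⟩

lemma edge_pair {e : Finset ℕ} (he : e ∈ M) : ∃ a b, a < b ∧ e = {a, b} := by
  obtain ⟨a, b, hab, rfl⟩ := Finset.card_eq_two.1 (hM.1 e he)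
  rcases lt_or_gt_of_ne hab with h | h
  · exact ⟨a, b, h, rfl⟩
  · exact ⟨b, a, h, by rw [Finset.pair_comm]⟩

lemma edge_unique {e f : Finset ℕ} (he : e ∈ M) (hf : f ∈ M) {v : ℕ}
    (hve : v ∈ e) (hvf : v ∈ f) : e = f := by
  by_contra hne
  exact (disjoint_left.1 (hM.2.1 e he f hf hne)) hve hvf

lemma exists_edge {v : ℕ} (hv : v ∈ Finset.Icc 1 (2 * n)) : ∃ e ∈ M, v ∈ e := by
  rw [← hM.2.2] at hv
  obtain ⟨e, he, hve⟩ := mem_biUnion.1 hv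
  exact ⟨e, he, hve⟩

lemma card_matching : M.card = n := by
  have h1 : (M.biUnion id).card = ∑ e ∈ M, e.card :=
    card_biUnion (fun e he f hf hne => hM.2.1 e he f hf hne)
  rw [hM.2.2, Nat.card_Icc] at h1
  have h2 : ∑ e ∈ M, e.card = 2 * M.card := by
    rw [Finset.sum_congr rfl hM.1, Finset.sum_const, smul_eq_mul, mul_comm]
  omega

end Basic

/-- The set of minima of edges of `M` within `[1, 2n]`. -/
noncomputable def minsOf (n : ℕ) (M : Finset (Finset ℕ)) : Finset ℕ :=
  (Finset.Icc 1 (2 * n)).filter (fun v => ∃ e ∈ M, v ∈ e ∧ ∃ w ∈ e, v < w)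

section Mins
variable {n : ℕ} {M : Finset (Finset ℕ)} (hM : IsRMatching 2 n M)
include hM

lemma min_mem_minsOf {a b : ℕ} (hab : a < b) (he : ({a, b} : Finset ℕ) ∈ M) :
    a ∈ minsOf n M := by
  refine mem_filter.2 ⟨edge_subset hM he (mem_insert_self _ _), ⟨{a, b}, he, mem_insert_self _ _,
    b, mem_insert_of_mem (mem_singleton_self _), hab⟩⟩

lemma max_not_mem_minsOf {a b : ℕ} (hab : a < b) (he : ({a, b} : Finset ℕ) ∈ M) :
    b ∉ minsOf n M := by
  intro hmem
  obtain ⟨_, f, hf, hbf, w, hwf, hbw⟩ := mem_filter.1 hmem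
  have : f = {a, b} := edge_unique hM hf he hbf (mem_insert_of_mem (mem_singleton_self _))
  subst this
  rcases mem_insert.1 hwf with rfl | hw
  · omega
  · rw [mem_singleton] at hw; omega

lemma cross_identity {k : ℕ} (hk : k ≤ 2 * n) :
    crossAt k M + k = 2 * ((minsOf n M) ∩ Finset.Icc 1 k).card := by
  classical
  set I := Finset.Icc 1 k with hI
  set A := M.filter (fun e => (e ∩ I).Nonempty) with hA
  -- Step 1: minsOf ∩ I = A.image emin where emin is min of the pair
  have hstep1 : (minsOf n M) ∩ I = A.image (fun e => if h : e.Nonempty then e.min' h else 0) := by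
    ext v
    constructor
    · intro hv
      obtain ⟨hv1, hv2⟩ := mem_inter.1 hv
      obtain ⟨hvIcc, e, he, hve, w, hwe, hvw⟩ := mem_filter.1 hv1
      obtain ⟨a, b, hab, rfl⟩ := edge_pair hM he
      have hva : v = a := by
        rcases mem_insert.1 hve with rfl | h1
        · rfl
        · rw [mem_singleton] at h1; subst h1
          rcases mem_insert.1 hwe with rfl | h2
          · omega
          · rw [mem_singleton] at h2; omega
      subst hva
      refine mem_image.2 ⟨{v, b}, mem_filter.2 ⟨he, ⟨v, mem_inter.2 ⟨mem_insert_self _ _, hv2⟩⟩⟩, ?_⟩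
      have hne : ({v, b} : Finset ℕ).Nonempty := ⟨v, mem_insert_self _ _⟩
      rw [dif_pos hne]
      have : ({v, b} : Finset ℕ).min' hne = v := by
        apply le_antisymm
        · exact min'_le _ _ (mem_insert_self _ _)
        · apply le_min'
          intro y hy
          rcases mem_insert.1 hy with rfl | hy
          · exact le_refl _
          · rw [mem_singleton] at hy; omega
      exact this
    · intro hv
      obtain ⟨e, he, hemin⟩ := mem_image.1 hv
      obtain ⟨heM, x, hxe⟩ := mem_filter.1 he
      obtain ⟨a, b, hab, rfl⟩ := edge_pair hM heM
      have hne : ({a, b} : Finset ℕ).Nonempty := ⟨a, mem_insert_self _ _⟩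
      rw [dif_pos hne] at hemin
      have hmin : ({a, b} : Finset ℕ).min' hne = a := by
        apply le_antisymm
        · exact min'_le _ _ (mem_insert_self _ _)
        · apply le_min'
          intro y hy
          rcases mem_insert.1 hy with rfl | hy
          · exact le_refl _
          · rw [mem_singleton] at hy; omega
      rw [hmin] at hemin
      subst hemin
      refine mem_inter.2 ⟨min_mem_minsOf hM hab heM, ?_⟩
      -- v = a ≤ x ≤ k
      obtain ⟨hxab, hxI⟩ := mem_inter.1 hxe
      have hx1 : x ≤ k := (mem_Icc.1 hxI).2
      have ha1 : 1 ≤ a := (mem_Icc.1 (edge_subset hM heM (mem_insert_self _ _))).1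
      have : a ≤ x := by
        rcases mem_insert.1 hxab with rfl | h
        · exact le_refl _
        · rw [mem_singleton] at h; omega
      exact mem_Icc.2 ⟨ha1, by omega⟩
  -- injectivity of emin on A
  have hinj : Set.InjOn (fun (e : Finset ℕ) => if h : e.Nonempty then e.min' h else 0) ↑A := by
    intro e he f hf heq
    have heM := (mem_filter.1 (Finset.mem_coe.1 he)).1
    have hfM := (mem_filter.1 (Finset.mem_coe.1 hf)).1
    have hene : e.Nonempty := Finset.card_pos.1 (by rw [hM.1 e heM]; omega)
    have hfne : f.Nonempty := Finset.card_pos.1 (by rw [hM.1 f hfM]; omega)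
    simp only [dif_pos hene, dif_pos hfne] at heq
    exact edge_unique hM heM hfM (heq ▸ e.min'_mem hene) (f.min'_mem hfne)
  have hcard1 : ((minsOf n M) ∩ I).card = A.card := by
    rw [hstep1, Finset.card_image_of_injOn hinj]
  -- Step 2: k = sum over M of |e ∩ I|
  have hstep2 : ∑ e ∈ M, (e ∩ I).card = k := by
    have hdisj : ∀ e ∈ M, ∀ f ∈ M, e ≠ f → Disjoint (e ∩ I) (f ∩ I) := by
      intro e he f hf hne
      exact (hM.2.1 e he f hf hne).mono (inter_subset_left) (inter_subset_left)
    rw [← card_biUnion hdisj]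
    have : M.biUnion (fun e => e ∩ I) = (M.biUnion id) ∩ I := by
      ext x
      simp only [mem_biUnion, mem_inter, id]
      tauto
    rw [this, hM.2.2, hI]
    have : Finset.Icc 1 (2*n) ∩ Finset.Icc 1 k = Finset.Icc 1 k := by
      rw [Finset.inter_eq_right]
      exact Finset.Icc_subset_Icc (le_refl _) hk
    rw [this, Nat.card_Icc]
    omega
  -- Step 3: split the sum
  set Q := fun (e : Finset ℕ) => (e \ I).Nonempty with hQ
  have hsplit : ∑ e ∈ M, (e ∩ I).card =
      ∑ e ∈ A.filter Q, (e ∩ I).card + ∑ e ∈ A.filter (fun e => ¬ Q e), (e ∩ I).card := by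
    rw [Finset.sum_filter_add_sum_filter_not]
    rw [hA]
    rw [← Finset.sum_filter_add_sum_filter_not M (fun e => (e ∩ I).Nonempty)]
    have : ∑ e ∈ M.filter (fun e => ¬ (e ∩ I).Nonempty), (e ∩ I).card = 0 := by
      apply Finset.sum_eq_zero
      intro e he
      have := (mem_filter.1 he).2
      rw [Finset.not_nonempty_iff_eq_empty] at this
      rw [this]; rfl
    omega
  have hcrossA : M.filter (fun e => (e ∩ I).Nonempty ∧ (e \ I).Nonempty) = A.filter Q := by
    rw [hA, Finset.filter_filter]
  have hones : ∀ e ∈ A.filter Q, (e ∩ I).card = 1 := by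
    intro e he
    obtain ⟨heA, heQ⟩ := mem_filter.1 he
    obtain ⟨heM, heP⟩ := mem_filter.1 heA
    have h2 : (e ∩ I).card < 2 := by
      have hss : e ∩ I ⊂ e := by
        refine Finset.ssubset_iff_of_subset (inter_subset_left) |>.2 ?_
        obtain ⟨y, hy⟩ := heQ
        exact ⟨y, (mem_sdiff.1 hy).1, fun hc => (mem_sdiff.1 hy).2 (mem_inter.1 hc).2⟩
      have := Finset.card_lt_card hss
      rw [hM.1 e heM] at this
      exact this
    have h1 : 1 ≤ (e ∩ I).card := Finset.card_pos.2 heP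
    omega
  have htwos : ∀ e ∈ A.filter (fun e => ¬ Q e), (e ∩ I).card = 2 := by
    intro e he
    obtain ⟨heA, heQ⟩ := mem_filter.1 he
    obtain ⟨heM, _⟩ := mem_filter.1 heA
    have : e ∩ I = e := by
      rw [Finset.inter_eq_left]
      intro x hx
      by_contra hxI
      exact heQ ⟨x, mem_sdiff.2 ⟨hx, hxI⟩⟩
    rw [this]
    exact hM.1 e heM
  have hsum1 : ∑ e ∈ A.filter Q, (e ∩ I).card = (A.filter Q).card := by
    rw [Finset.sum_congr rfl hones]; simp
  have hsum2 : ∑ e ∈ A.filter (fun e => ¬ Q e), (e ∩ I).card =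
      2 * (A.filter (fun e => ¬ Q e)).card := by
    rw [Finset.sum_congr rfl htwos]; simp [mul_comm]
  have hAcard : A.card = (A.filter Q).card + (A.filter (fun e => ¬ Q e)).card :=
    (Finset.card_filter_add_card_filter_not _).symm
  have : crossAt k M = (A.filter Q).card := by
    rw [crossAt, ← hI, hcrossA]
  omega

lemma card_minsOf : (minsOf n M).card = n := by
  have h := cross_identity hM (le_refl (2 * n))
  have hcross0 : crossAt (2 * n) M = 0 := by
    rw [crossAt, Finset.card_eq_zero, Finset.filter_eq_empty_iff]
    intro e he
    rw [not_and_or]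
    right
    rw [Finset.not_nonempty_iff_eq_empty, Finset.sdiff_eq_empty_iff_subset]
    exact edge_subset hM he
  have hsub : minsOf n M ∩ Finset.Icc 1 (2 * n) = minsOf n M := by
    rw [Finset.inter_eq_left]
    exact filter_subset _ _
  rw [hcross0, hsub] at h
  omega

lemma one_mem_minsOf (hn : 1 ≤ n) : 1 ∈ minsOf n M := by
  have h1 : (1 : ℕ) ∈ Finset.Icc 1 (2 * n) := mem_Icc.2 ⟨le_refl _, by omega⟩
  obtain ⟨e, he, h1e⟩ := exists_edge hM h1
  obtain ⟨a, b, hab, rfl⟩ := edge_pair hM he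
  have ha1 : 1 ≤ a := (mem_Icc.1 (edge_subset hM he (mem_insert_self _ _))).1
  have h1a : 1 = a := by
    rcases mem_insert.1 h1e with h | h
    · exact h
    · rw [mem_singleton] at h; omega
  subst h1a
  exact min_mem_minsOf hM hab he

lemma two_n_not_mem_minsOf : 2 * n ∉ minsOf n M := by
  intro hmem
  obtain ⟨_, e, he, hve, w, hwe, hvw⟩ := mem_filter.1 hmem
  have := (mem_Icc.1 (edge_subset hM he hwe)).2
  omega

end Mins

-- case A data
def LA (n : ℕ) : Finset ℕ := Finset.Icc 1 (n-1)
def RA (n p q : ℕ) : Finset ℕ := (Finset.Icc n (2*n)) \ {n+p, n+q+1}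
def eA (n p q : ℕ) : Finset ℕ := {n+p, n+q+1}
-- case B data
def LB (n p q : ℕ) : Finset ℕ := (Finset.Icc 1 (n+1)) \ {q, p}
def RB (n : ℕ) : Finset ℕ := Finset.Icc (n+2) (2*n)
def eB (p q : ℕ) : Finset ℕ := {q, p}

def shapeA (n p : ℕ) : Finset ℕ := insert (n+p) (Finset.Icc 1 (n-1))
def shapeB (n p : ℕ) : Finset ℕ := (Finset.Icc 1 (n+1)).erase p

section BackA
variable {n p q : ℕ} (hn : 2 ≤ n) (hp1 : 1 ≤ p) (hpq : p ≤ q) (hq : q ≤ n - 1)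
variable {M0 : Finset (Finset ℕ)} (hM0 : IsPairing (LA n) (RA n p q) M0)

-- membership unfolding helpers
lemma memLA {a : ℕ} (h : a ∈ LA n) : 1 ≤ a ∧ a ≤ n - 1 := mem_Icc.1 h
lemma memRA {b : ℕ} (h : b ∈ RA n p q) : n ≤ b ∧ b ≤ 2*n ∧ b ≠ n+p ∧ b ≠ n+q+1 := by
  obtain ⟨h1, h2⟩ := mem_sdiff.1 h
  obtain ⟨h3, h4⟩ := mem_Icc.1 h1
  simp only [mem_insert, mem_singleton] at h2
  push_neg at h2
  exact ⟨h3, h4, h2.1, h2.2⟩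

include hn hp1 hpq hq hM0 in
lemma backA_matching : IsRMatching 2 n (insert (eA n p q) M0) := by
  have hq' : q ≤ n - 1 := hq
  have hdisjA : ∀ f ∈ M0, Disjoint (eA n p q) f := by
    intro f hf
    obtain ⟨a, ha, b, hb, rfl⟩ := hM0.1 f hf
    obtain ⟨ha1, ha2⟩ := memLA ha
    obtain ⟨hb1, hb2, hb3, hb4⟩ := memRA hb
    rw [disjoint_left]
    intro x hx hx2
    simp only [eA, mem_insert, mem_singleton] at hx
    simp only [mem_insert, mem_singleton] at hx2
    rcases hx with rfl | rfl <;> rcases hx2 with rfl | rfl <;> omega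
  refine ⟨?_, ?_, ?_⟩
  · intro e he
    rcases mem_insert.1 he with rfl | he
    · rw [eA, card_insert_of_notMem (by simp; omega), card_singleton]
    · obtain ⟨a, ha, b, hb, rfl⟩ := hM0.1 e he
      obtain ⟨ha1, ha2⟩ := memLA ha
      obtain ⟨hb1, hb2, hb3, hb4⟩ := memRA hb
      rw [card_insert_of_notMem (by simp; omega), card_singleton]
  · intro e he f hf hne
    rcases mem_insert.1 he with rfl | he <;> rcases mem_insert.1 hf with rfl | hf
    · exact absurd rfl hne
    · exact hdisjA f hf
    · exact (hdisjA e he).symm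
    · exact hM0.2.1 e he f hf hne
  · rw [biUnion_insert, hM0.2.2]
    ext x
    simp only [eA, LA, RA, id, mem_union, mem_insert, mem_singleton, mem_sdiff, mem_Icc]
    omega

include hn hp1 hpq hq hM0 in
lemma backA_mins : minsOf n (insert (eA n p q) M0) = shapeA n p := by
  have hM := backA_matching hn hp1 hpq hq hM0
  have hsub : shapeA n p ⊆ minsOf n (insert (eA n p q) M0) := by
    intro v hv
    rcases mem_insert.1 hv with rfl | hv
    · exact min_mem_minsOf hM (by omega) (mem_insert_self _ _)
    · -- v ∈ Icc 1 (n-1) = LA n ⊆ L ∪ R = biUnion M0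
      have hvU : v ∈ M0.biUnion id := by
        rw [hM0.2.2]; exact mem_union_left _ hv
      obtain ⟨f, hf, hvf⟩ := mem_biUnion.1 hvU
      obtain ⟨a, ha, b, hb, rfl⟩ := hM0.1 f hf
      obtain ⟨ha1, ha2⟩ := memLA ha
      obtain ⟨hb1, hb2, hb3, hb4⟩ := memRA hb
      have hva : v = a := by
        rcases mem_insert.1 hvf with rfl | h
        · rfl
        · rw [mem_singleton] at h
          obtain ⟨h1, h2⟩ := mem_Icc.1 hv
          omega
      rw [hva]
      exact min_mem_minsOf hM (show a < b by omega) (mem_insert_of_mem hf)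
  refine (Finset.eq_of_subset_of_card_le hsub ?_).symm
  rw [card_minsOf hM, shapeA, card_insert_of_notMem (by simp [mem_Icc]; omega), Nat.card_Icc]
  omega

include hn hp1 hpq hq in
lemma shapeA_bound {k : ℕ} (hk1 : 1 ≤ k) (hk2 : k ≤ 2*n) :
    2 * ((shapeA n p) ∩ Finset.Icc 1 k).card ≤ k + (n - 1) := by
  have b1 : ((shapeA n p) ∩ Finset.Icc 1 k).card ≤ k := by
    refine le_trans (card_le_card inter_subset_right) ?_
    rw [Nat.card_Icc]; omega
  have b3 : ((shapeA n p) ∩ Finset.Icc 1 k).card ≤ n := by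
    refine le_trans (card_le_card inter_subset_left) ?_
    rw [shapeA, card_insert_of_notMem (by simp [mem_Icc]; omega), Nat.card_Icc]; omega
  by_cases hcase : k ≤ n + p - 1
  · have b2 : ((shapeA n p) ∩ Finset.Icc 1 k).card ≤ n - 1 := by
      refine le_trans (card_le_card ?_) (by rw [Nat.card_Icc]; omega : (Finset.Icc 1 (n-1)).card ≤ n - 1)
      intro x hx
      obtain ⟨hx1, hx2⟩ := mem_inter.1 hx
      rcases mem_insert.1 hx1 with rfl | h
      · exfalso
        have := (mem_Icc.1 hx2).2
        omega
      · exact h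
    omega
  · omega

include hn hp1 hpq hq in
lemma shapeA_eq_at : ((shapeA n p) ∩ Finset.Icc 1 (n-1)).card = n - 1 := by
  have : (shapeA n p) ∩ Finset.Icc 1 (n-1) = Finset.Icc 1 (n-1) := by
    ext x
    simp only [shapeA, mem_inter, mem_insert, mem_Icc]
    omega
  rw [this, Nat.card_Icc]
  omega

include hn hp1 hpq hq hM0 in
lemma backA_sock : sockNum n (insert (eA n p q) M0) = n - 1 := by
  have hM := backA_matching hn hp1 hpq hq hM0
  have hmins := backA_mins hn hp1 hpq hq hM0
  apply le_antisymm
  · apply Finset.sup_le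
    intro k hk
    obtain ⟨hk1, hk2⟩ := mem_Icc.1 hk
    have hid := cross_identity hM hk2
    rw [hmins] at hid
    have := shapeA_bound hn hp1 hpq hq hk1 hk2
    omega
  · have hk0 : (n-1 : ℕ) ∈ Finset.Icc 1 (2*n) := mem_Icc.2 ⟨by omega, by omega⟩
    have hid := cross_identity hM (show n - 1 ≤ 2*n by omega)
    rw [hmins, shapeA_eq_at hn hp1 hpq hq] at hid
    have : crossAt (n-1) (insert (eA n p q) M0) = n - 1 := by omega
    calc n - 1 = crossAt (n-1) (insert (eA n p q) M0) := this.symm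
    _ ≤ _ := Finset.le_sup (f := fun k => crossAt k (insert (eA n p q) M0)) hk0
end BackA

section BackB
variable {n p q : ℕ} (hn : 2 ≤ n) (hq1 : 1 ≤ q) (hqp : q < p) (hp : p ≤ n - 1)
variable {M0 : Finset (Finset ℕ)} (hM0 : IsPairing (LB n p q) (RB n) M0)

lemma memLB {a : ℕ} (h : a ∈ LB n p q) : (1 ≤ a ∧ a ≤ n + 1) ∧ a ≠ q ∧ a ≠ p := by
  obtain ⟨h1, h2⟩ := mem_sdiff.1 h
  simp only [mem_insert, mem_singleton] at h2
  push_neg at h2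
  exact ⟨mem_Icc.1 h1, h2⟩

lemma memRB {b : ℕ} (h : b ∈ RB n) : n + 2 ≤ b ∧ b ≤ 2 * n := mem_Icc.1 h

include hn hq1 hqp hp hM0 in
lemma backB_matching : IsRMatching 2 n (insert (eB p q) M0) := by
  have hdisjB : ∀ f ∈ M0, Disjoint (eB p q) f := by
    intro f hf
    obtain ⟨a, ha, b, hb, rfl⟩ := hM0.1 f hf
    obtain ⟨⟨ha1, ha2⟩, ha3, ha4⟩ := memLB ha
    obtain ⟨hb1, hb2⟩ := memRB hb
    rw [disjoint_left]
    intro x hx hx2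
    simp only [eB, mem_insert, mem_singleton] at hx
    simp only [mem_insert, mem_singleton] at hx2
    rcases hx with rfl | rfl <;> rcases hx2 with rfl | rfl <;> omega
  refine ⟨?_, ?_, ?_⟩
  · intro e he
    rcases mem_insert.1 he with rfl | he
    · rw [eB, card_insert_of_notMem (by simp; omega), card_singleton]
    · obtain ⟨a, ha, b, hb, rfl⟩ := hM0.1 e he
      obtain ⟨⟨ha1, ha2⟩, ha3, ha4⟩ := memLB ha
      obtain ⟨hb1, hb2⟩ := memRB hb
      rw [card_insert_of_notMem (by simp; omega), card_singleton]
  · intro e he f hf hne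
    rcases mem_insert.1 he with rfl | he <;> rcases mem_insert.1 hf with rfl | hf
    · exact absurd rfl hne
    · exact hdisjB f hf
    · exact (hdisjB e he).symm
    · exact hM0.2.1 e he f hf hne
  · rw [biUnion_insert, hM0.2.2]
    ext x
    simp only [eB, LB, RB, id, mem_union, mem_insert, mem_singleton, mem_sdiff, mem_Icc]
    omega

include hn hq1 hqp hp hM0 in
lemma backB_mins : minsOf n (insert (eB p q) M0) = shapeB n p := by
  have hM := backB_matching hn hq1 hqp hp hM0
  have hsub : shapeB n p ⊆ minsOf n (insert (eB p q) M0) := by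
    intro v hv
    obtain ⟨hvp, hvIcc⟩ := mem_erase.1 hv
    obtain ⟨hv1, hv2⟩ := mem_Icc.1 hvIcc
    by_cases hvq : v = q
    · subst hvq
      exact min_mem_minsOf hM hqp (mem_insert_self _ _)
    · have hvL : v ∈ LB n p q := by
        rw [LB, mem_sdiff]
        refine ⟨hvIcc, ?_⟩
        simp only [mem_insert, mem_singleton]
        push_neg
        exact ⟨hvq, hvp⟩
      have hvU : v ∈ M0.biUnion id := by
        rw [hM0.2.2]; exact mem_union_left _ hvL
      obtain ⟨f, hf, hvf⟩ := mem_biUnion.1 hvU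
      obtain ⟨a, ha, b, hb, rfl⟩ := hM0.1 f hf
      obtain ⟨⟨ha1, ha2⟩, _, _⟩ := memLB ha
      obtain ⟨hb1, hb2⟩ := memRB hb
      have hva : v = a := by
        rcases mem_insert.1 hvf with rfl | h
        · rfl
        · rw [mem_singleton] at h; omega
      rw [hva]
      exact min_mem_minsOf hM (show a < b by omega) (mem_insert_of_mem hf)
  refine (Finset.eq_of_subset_of_card_le hsub ?_).symm
  rw [card_minsOf hM, shapeB, card_erase_of_mem (mem_Icc.2 ⟨by omega, by omega⟩), Nat.card_Icc]
  omega

include hn hq1 hqp hp in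
lemma shapeB_bound {k : ℕ} (hk1 : 1 ≤ k) (hk2 : k ≤ 2*n) :
    2 * ((shapeB n p) ∩ Finset.Icc 1 k).card ≤ k + (n - 1) := by
  have b1 : ((shapeB n p) ∩ Finset.Icc 1 k).card ≤ k := by
    refine le_trans (card_le_card inter_subset_right) ?_
    rw [Nat.card_Icc]; omega
  have b3 : ((shapeB n p) ∩ Finset.Icc 1 k).card ≤ n := by
    refine le_trans (card_le_card inter_subset_left) ?_
    rw [shapeB, card_erase_of_mem (mem_Icc.2 ⟨by omega, by omega⟩), Nat.card_Icc]; omega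
  have b2 : p ≤ k → ((shapeB n p) ∩ Finset.Icc 1 k).card ≤ k - 1 := by
    intro hpk
    have hsub : (shapeB n p) ∩ Finset.Icc 1 k ⊆ (Finset.Icc 1 k).erase p := by
      intro x hx
      obtain ⟨hx1, hx2⟩ := mem_inter.1 hx
      exact mem_erase.2 ⟨(mem_erase.1 hx1).1, hx2⟩
    refine le_trans (card_le_card hsub) ?_
    rw [card_erase_of_mem (mem_Icc.2 ⟨by omega, hpk⟩), Nat.card_Icc]
    omega
  by_cases hc1 : k ≤ n - 1
  · omega
  · by_cases hc2 : n + 1 ≤ k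
    · omega
    · have := b2 (by omega)
      omega

lemma shapeB_eq_at (hn : 2 ≤ n) (hp1 : 1 ≤ p) (hp' : p ≤ n - 1) :
    ((shapeB n p) ∩ Finset.Icc 1 (n+1)).card = n := by
  have : (shapeB n p) ∩ Finset.Icc 1 (n+1) = shapeB n p := by
    rw [Finset.inter_eq_left]
    intro x hx
    exact (mem_erase.1 hx).2
  rw [this, shapeB, card_erase_of_mem (mem_Icc.2 ⟨by omega, by omega⟩), Nat.card_Icc]
  omega

include hn hq1 hqp hp hM0 in
lemma backB_sock : sockNum n (insert (eB p q) M0) = n - 1 := by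
  have hM := backB_matching hn hq1 hqp hp hM0
  have hmins := backB_mins hn hq1 hqp hp hM0
  apply le_antisymm
  · apply Finset.sup_le
    intro k hk
    obtain ⟨hk1, hk2⟩ := mem_Icc.1 hk
    have hid := cross_identity hM hk2
    rw [hmins] at hid
    have := shapeB_bound hn hq1 hqp hp hk1 hk2
    omega
  · have hk0 : (n+1 : ℕ) ∈ Finset.Icc 1 (2*n) := mem_Icc.2 ⟨by omega, by omega⟩
    have hid := cross_identity hM (show n + 1 ≤ 2*n by omega)
    rw [hmins, shapeB_eq_at hn (by omega) hp] at hid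
    have : crossAt (n+1) (insert (eB p q) M0) = n - 1 := by omega
    calc n - 1 = crossAt (n+1) (insert (eB p q) M0) := this.symm
    _ ≤ _ := Finset.le_sup (f := fun k => crossAt k (insert (eB p q) M0)) hk0
end BackB


section Forward
variable {n : ℕ} {M : Finset (Finset ℕ)} (hM : IsRMatching 2 n M)
include hM

lemma minsOf_partner {v : ℕ} (hv : v ∈ minsOf n M) :
    ∃ b, v < b ∧ ({v, b} : Finset ℕ) ∈ M := by
  obtain ⟨hIcc, e, he, hve, w, hwe, hvw⟩ := mem_filter.1 hv
  obtain ⟨a, b, hab, rfl⟩ := edge_pair hM he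
  have hva : v = a := by
    rcases mem_insert.1 hve with rfl | h
    · rfl
    · rw [mem_singleton] at h; subst h
      rcases mem_insert.1 hwe with rfl | h2
      · omega
      · rw [mem_singleton] at h2; omega
  subst hva
  exact ⟨b, hab, he⟩

lemma not_mins_partner {v : ℕ} (hvIcc : v ∈ Finset.Icc 1 (2 * n)) (hv : v ∉ minsOf n M) :
    ∃ a, a < v ∧ ({a, v} : Finset ℕ) ∈ M := by
  obtain ⟨e, he, hve⟩ := exists_edge hM hvIcc
  obtain ⟨a, b, hab, rfl⟩ := edge_pair hM he
  rcases mem_insert.1 hve with rfl | h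
  · exact absurd (min_mem_minsOf hM hab he) hv
  · rw [mem_singleton] at h; subst h
    exact ⟨a, hab, he⟩

lemma biUnion_erase_eq {e0 : Finset ℕ} (he0 : e0 ∈ M) :
    (M.erase e0).biUnion id = Finset.Icc 1 (2 * n) \ e0 := by
  ext x
  simp only [mem_biUnion, mem_sdiff, id]
  constructor
  · rintro ⟨f, hf, hxf⟩
    obtain ⟨hfne, hfM⟩ := mem_erase.1 hf
    refine ⟨edge_subset hM hfM hxf, ?_⟩
    intro hxe0
    exact (disjoint_left.1 (hM.2.1 f hfM e0 he0 hfne)) hxf hxe0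
  · rintro ⟨hxIcc, hxe0⟩
    obtain ⟨f, hf, hxf⟩ := exists_edge hM hxIcc
    refine ⟨f, mem_erase.2 ⟨?_, hf⟩, hxf⟩
    rintro rfl
    exact hxe0 hxf

lemma extractA {P : ℕ} (hn : 2 ≤ n) (hS : minsOf n M = insert P (Finset.Icc 1 (n-1)))
    (hP1 : n + 1 ≤ P) (hP2 : P ≤ 2*n - 1) :
    ∃ p q, 1 ≤ p ∧ p ≤ n-1 ∧ 1 ≤ q ∧ q ≤ n-1 ∧ p ≤ q ∧ eA n p q ∈ M ∧
      IsPairing (LA n) (RA n p q) (M.erase (eA n p q)) := by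
  have hPS : P ∈ minsOf n M := by rw [hS]; exact mem_insert_self _ _
  obtain ⟨m, hPm, hePm⟩ := minsOf_partner hM hPS
  have hm2n : m ≤ 2*n :=
    (mem_Icc.1 (edge_subset hM hePm (mem_insert_of_mem (mem_singleton_self _)))).2
  refine ⟨P - n, m - n - 1, by omega, by omega, by omega, by omega, by omega, ?_, ?_⟩
  · have : eA n (P - n) (m - n - 1) = {P, m} := by
      rw [eA]
      congr 1 <;> [skip; congr 1] <;> omega
    rw [this]; exact hePm
  · have heq : eA n (P - n) (m - n - 1) = {P, m} := by
      rw [eA]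
      congr 1 <;> [skip; congr 1] <;> omega
    rw [heq]
    refine ⟨?_, ?_, ?_⟩
    · intro f hf
      obtain ⟨hfne, hfM⟩ := mem_erase.1 hf
      obtain ⟨a, b, hab, rfl⟩ := edge_pair hM hfM
      have haS : a ∈ minsOf n M := min_mem_minsOf hM hab hfM
      have haP : a ≠ P := by
        rintro rfl
        exact hfne (edge_unique hM hfM hePm (mem_insert_self _ _) (mem_insert_self _ _))
      have haL : a ∈ LA n := by
        rw [hS] at haS
        rcases mem_insert.1 haS with rfl | h
        · exact absurd rfl haP
        · exact h
      have hbnS : b ∉ minsOf n M := max_not_mem_minsOf hM hab hfM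
      have hbIcc := mem_Icc.1 (edge_subset hM hfM (mem_insert_of_mem (mem_singleton_self _)))
      have hbP : b ≠ P := by rintro rfl; exact hbnS hPS
      have hbm : b ≠ m := by
        rintro rfl
        exact hfne (edge_unique hM hfM hePm (mem_insert_of_mem (mem_singleton_self _))
          (mem_insert_of_mem (mem_singleton_self _)))
      have hbn : n ≤ b := by
        by_contra hc
        push_neg at hc
        apply hbnS
        rw [hS]
        exact mem_insert_of_mem (mem_Icc.2 ⟨by omega, by omega⟩)
      refine ⟨a, haL, b, ?_, rfl⟩
      rw [RA, mem_sdiff]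
      refine ⟨mem_Icc.2 ⟨hbn, hbIcc.2⟩, ?_⟩
      simp only [mem_insert, mem_singleton]
      push_neg
      constructor <;> omega
    · intro e he f hf hne
      exact hM.2.1 e (mem_of_mem_erase he) f (mem_of_mem_erase hf) hne
    · rw [biUnion_erase_eq hM hePm]
      ext x
      simp only [LA, RA, mem_union, mem_sdiff, mem_Icc, mem_insert, mem_singleton]
      omega

lemma extractB {C : ℕ} (hn : 2 ≤ n) (hS : minsOf n M = (Finset.Icc 1 (n+1)).erase C)
    (hC1 : 2 ≤ C) (hC2 : C ≤ n-1) :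
    ∃ p q, 1 ≤ p ∧ p ≤ n-1 ∧ 1 ≤ q ∧ q ≤ n-1 ∧ q < p ∧ eB p q ∈ M ∧
      IsPairing (LB n p q) (RB n) (M.erase (eB p q)) := by
  have hCnS : C ∉ minsOf n M := by rw [hS]; exact notMem_erase _ _
  have hCIcc : C ∈ Finset.Icc 1 (2*n) := mem_Icc.2 ⟨by omega, by omega⟩
  obtain ⟨a, haC, heaC⟩ := not_mins_partner hM hCIcc hCnS
  have haS : a ∈ minsOf n M := min_mem_minsOf hM haC heaC
  have ha1 : 1 ≤ a := (mem_Icc.1 (mem_of_mem_erase (hS ▸ haS))).1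
  refine ⟨C, a, by omega, by omega, by omega, by omega, by omega, heaC, ?_⟩
  refine ⟨?_, ?_, ?_⟩
  · intro f hf
    obtain ⟨hfne, hfM⟩ := mem_erase.1 hf
    obtain ⟨a', b', hab', rfl⟩ := edge_pair hM hfM
    have ha'S : a' ∈ minsOf n M := min_mem_minsOf hM hab' hfM
    have ha'a : a' ≠ a := by
      rintro rfl
      exact hfne (edge_unique hM hfM heaC (mem_insert_self _ _) (mem_insert_self _ _))
    have ha'C : a' ≠ C := by rintro rfl; exact hCnS ha'S
    have ha'L : a' ∈ LB n C a := by
      rw [LB, mem_sdiff]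
      rw [hS] at ha'S
      refine ⟨mem_of_mem_erase ha'S, ?_⟩
      simp only [mem_insert, mem_singleton]
      push_neg
      exact ⟨ha'a, ha'C⟩
    have hb'nS : b' ∉ minsOf n M := max_not_mem_minsOf hM hab' hfM
    have hb'Icc := mem_Icc.1 (edge_subset hM hfM (mem_insert_of_mem (mem_singleton_self _)))
    have hb'C : b' ≠ C := by
      rintro rfl
      exact hfne (edge_unique hM hfM heaC (mem_insert_of_mem (mem_singleton_self _))
        (mem_insert_of_mem (mem_singleton_self _)))
    have hb'n2 : n + 2 ≤ b' := by
      by_contra hc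
      push_neg at hc
      apply hb'nS
      rw [hS]
      exact mem_erase.2 ⟨hb'C, mem_Icc.2 ⟨by omega, by omega⟩⟩
    exact ⟨a', ha'L, b', mem_Icc.2 ⟨hb'n2, hb'Icc.2⟩, rfl⟩
  · intro e he f hf hne
    exact hM.2.1 e (mem_of_mem_erase he) f (mem_of_mem_erase hf) hne
  · rw [show eB C a = ({a, C} : Finset ℕ) from rfl, biUnion_erase_eq hM heaC]
    ext x
    simp only [LB, RB, mem_union, mem_sdiff, mem_Icc, mem_insert, mem_singleton]
    omega

lemma forward (hn : 2 ≤ n) (hsock : sockNum n M = n - 1) :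
    ∃ p q, 1 ≤ p ∧ p ≤ n-1 ∧ 1 ≤ q ∧ q ≤ n-1 ∧
      ((p ≤ q ∧ eA n p q ∈ M ∧ IsPairing (LA n) (RA n p q) (M.erase (eA n p q))) ∨
       (q < p ∧ eB p q ∈ M ∧ IsPairing (LB n p q) (RB n) (M.erase (eB p q)))) := by
  unfold sockNum at hsock
  set S := minsOf n M with hSdef
  have hScard : S.card = n := card_minsOf hM
  have hSIcc : S ⊆ Finset.Icc 1 (2*n) := filter_subset _ _
  have h1S : 1 ∈ S := one_mem_minsOf hM (by omega)
  have h2nS : 2*n ∉ S := two_n_not_mem_minsOf hM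
  have hub : ∀ k, 1 ≤ k → k ≤ 2*n → 2 * (S ∩ Finset.Icc 1 k).card ≤ k + (n-1) := by
    intro k h1 h2
    have hle : crossAt k M ≤ n - 1 := by
      rw [← hsock]
      exact Finset.le_sup (f := fun k => crossAt k M) (mem_Icc.2 ⟨h1, h2⟩)
    have hci := cross_identity hM h2
    rw [← hSdef] at hci
    omega
  obtain ⟨k0, hk0mem, hk0sup⟩ := Finset.exists_mem_eq_sup (Finset.Icc 1 (2*n))
    (nonempty_Icc.2 (by omega)) (fun k => crossAt k M)
  obtain ⟨hk01, hk02⟩ := mem_Icc.1 hk0mem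
  have hcross0 : crossAt k0 M = n - 1 := by rw [hk0sup] at hsock; simpa using hsock
  have hid0 := cross_identity hM hk02
  rw [← hSdef] at hid0
  set c0 := (S ∩ Finset.Icc 1 k0).card with hc0
  have hc0n : c0 ≤ n := by
    rw [hc0, ← hScard]; exact card_le_card inter_subset_left
  have hc0k : c0 ≤ k0 := by
    refine le_trans (card_le_card inter_subset_right) ?_
    rw [Nat.card_Icc]; omega
  -- k0 = n-1 (c0 = n-1) or k0 = n+1 (c0 = n)
  have hk0cases : (k0 = n - 1 ∧ c0 = n - 1) ∨ (k0 = n + 1 ∧ c0 = n) := by omega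
  -- the n-cut bound
  have hncut : (S ∩ Finset.Icc 1 n).card ≤ n - 1 := by
    have := hub n (by omega) (by omega)
    omega
  rcases hk0cases with ⟨hk0, hc0v⟩ | ⟨hk0, hc0v⟩
  · -- Icc 1 (n-1) ⊆ S
    subst hk0
    have hIccS : Finset.Icc 1 (n-1) ⊆ S := by
      have hsub : S ∩ Finset.Icc 1 (n-1) ⊆ Finset.Icc 1 (n-1) := inter_subset_right
      have heq : S ∩ Finset.Icc 1 (n-1) = Finset.Icc 1 (n-1) := by
        refine Finset.eq_of_subset_of_card_le hsub ?_
        rw [Nat.card_Icc]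
        omega
      intro x hx
      rw [← heq] at hx
      exact (mem_inter.1 hx).1
    have hnnotS : n ∉ S := by
      intro hnS
      have : insert n (Finset.Icc 1 (n-1)) ⊆ S ∩ Finset.Icc 1 n := by
        intro x hx
        rcases mem_insert.1 hx with rfl | hx
        · exact mem_inter.2 ⟨hnS, mem_Icc.2 ⟨by omega, le_refl _⟩⟩
        · obtain ⟨h1, h2⟩ := mem_Icc.1 hx
          exact mem_inter.2 ⟨hIccS hx, mem_Icc.2 ⟨h1, by omega⟩⟩
      have hc := card_le_card this
      rw [card_insert_of_notMem (by simp [mem_Icc]; omega), Nat.card_Icc] at hc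
      omega
    -- S = insert P (Icc 1 (n-1))
    have hcard1 : (S \ Finset.Icc 1 (n-1)).card = 1 := by
      rw [card_sdiff_of_subset hIccS, hScard, Nat.card_Icc]
      omega
    obtain ⟨P, hP⟩ := Finset.card_eq_one.1 hcard1
    have hSP : S = insert P (Finset.Icc 1 (n-1)) := by
      have h1 : S \ Finset.Icc 1 (n-1) ∪ Finset.Icc 1 (n-1) = S :=
        Finset.sdiff_union_of_subset hIccS
      rw [hP] at h1
      rw [← h1]
      ext x; simp [mem_union, mem_insert]
    have hPmem : P ∈ S \ Finset.Icc 1 (n-1) := by rw [hP]; exact mem_singleton_self _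
    obtain ⟨hPS, hPnIcc⟩ := mem_sdiff.1 hPmem
    have hPIcc := mem_Icc.1 (hSIcc hPS)
    have hPn : P ≠ n := fun h => hnnotS (h ▸ hPS)
    have hP2n : P ≠ 2*n := fun h => h2nS (h ▸ hPS)
    have hPnIcc' : ¬ (1 ≤ P ∧ P ≤ n - 1) := fun h => hPnIcc (mem_Icc.2 h)
    obtain ⟨p, q, h1, h2, h3, h4, h5, h6, h7⟩ :=
      extractA hM hn hSP (by omega) (by omega)
    exact ⟨p, q, h1, h2, h3, h4, Or.inl ⟨h5, h6, h7⟩⟩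
  · -- S ⊆ Icc 1 (n+1)
    subst hk0
    have hSsub : S ⊆ Finset.Icc 1 (n+1) := by
      have heq : S ∩ Finset.Icc 1 (n+1) = S := by
        refine Finset.eq_of_subset_of_card_le inter_subset_left ?_
        omega
      rw [← heq]
      exact inter_subset_right
    have hcard1 : ((Finset.Icc 1 (n+1)) \ S).card = 1 := by
      rw [card_sdiff_of_subset hSsub, hScard, Nat.card_Icc]
      omega
    obtain ⟨C, hC⟩ := Finset.card_eq_one.1 hcard1
    have hCmem : C ∈ Finset.Icc 1 (n+1) \ S := by rw [hC]; exact mem_singleton_self _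
    obtain ⟨hCIcc, hCnS⟩ := mem_sdiff.1 hCmem
    have hSC : S = (Finset.Icc 1 (n+1)).erase C := by
      have h1 : (Finset.Icc 1 (n+1)) \ ((Finset.Icc 1 (n+1)) \ S) = S :=
        Finset.sdiff_sdiff_eq_self hSsub
      rw [hC] at h1
      rw [← h1, Finset.sdiff_singleton_eq_erase]
    have hC1 : C ≠ 1 := by rintro rfl; exact hCnS h1S
    have hCn1 : C ≠ n + 1 := by
      rintro rfl
      -- then S = Icc 1 n and |S ∩ Icc 1 n| = n, contradiction with hncut
      have : S ∩ Finset.Icc 1 n = S := by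
        refine Finset.inter_eq_left.2 ?_
        intro x hx
        have hx2 := mem_Icc.1 (hSsub hx)
        have hxn : x ≠ n + 1 := by rintro rfl; exact hCnS hx
        exact mem_Icc.2 ⟨hx2.1, by omega⟩
      rw [this] at hncut
      omega
    by_cases hCn : C = n
    · -- shape A with P = n+1
      have hSP : S = insert (n+1) (Finset.Icc 1 (n-1)) := by
        rw [hSC, hCn]
        ext x
        simp only [mem_erase, mem_insert, mem_Icc]
        omega
      obtain ⟨p, q, h1, h2, h3, h4, h5, h6, h7⟩ :=
        extractA hM hn hSP (by omega) (by omega)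
      exact ⟨p, q, h1, h2, h3, h4, Or.inl ⟨h5, h6, h7⟩⟩
    · -- shape B
      have hC2' : 2 ≤ C := by
        have := (mem_Icc.1 hCIcc).1
        omega
      have hCn1' : C ≤ n - 1 := by
        have := (mem_Icc.1 hCIcc).2
        omega
      obtain ⟨p, q, h1, h2, h3, h4, h5, h6, h7⟩ :=
        extractB hM hn hSC hC2' hCn1'
      exact ⟨p, q, h1, h2, h3, h4, Or.inr ⟨h5, h6, h7⟩⟩
end Forward


noncomputable def FA (n p q : ℕ) : Finset (Finset (Finset ℕ)) :=
  (pairings (LA n) (RA n p q)).image (insert (eA n p q))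
noncomputable def FB (n p q : ℕ) : Finset (Finset (Finset ℕ)) :=
  (pairings (LB n p q) (RB n)).image (insert (eB p q))
noncomputable def Fpq (n p q : ℕ) : Finset (Finset (Finset ℕ)) :=
  if p ≤ q then FA n p q else FB n p q

section Final
variable {n p q : ℕ}

lemma LA_card (hn : 2 ≤ n) : (LA n).card = n - 1 := by
  rw [LA, Nat.card_Icc]; omega

lemma RA_card (hn : 2 ≤ n) (hp1 : 1 ≤ p) (hpq : p ≤ q) (hq : q ≤ n - 1) :
    (RA n p q).card = n - 1 := by
  rw [RA, card_sdiff_of_subset]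
  · rw [Nat.card_Icc, card_insert_of_notMem (by simp; omega), card_singleton]
    omega
  · intro x hx
    simp only [mem_insert, mem_singleton] at hx
    rcases hx with rfl | rfl <;> exact mem_Icc.2 ⟨by omega, by omega⟩

lemma LARA_disj (hn : 2 ≤ n) : Disjoint (LA n) (RA n p q) := by
  rw [disjoint_left]
  intro x hx hx2
  have h1 := mem_Icc.1 hx
  have h2 := mem_Icc.1 (mem_sdiff.1 hx2).1
  omega

lemma LB_card (hn : 2 ≤ n) (hq1 : 1 ≤ q) (hqp : q < p) (hp : p ≤ n - 1) :
    (LB n p q).card = n - 1 := by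
  rw [LB, card_sdiff_of_subset]
  · rw [Nat.card_Icc, card_insert_of_notMem (by simp; omega), card_singleton]
    omega
  · intro x hx
    simp only [mem_insert, mem_singleton] at hx
    rcases hx with rfl | rfl <;> exact mem_Icc.2 ⟨by omega, by omega⟩

lemma RB_card (hn : 2 ≤ n) : (RB n).card = n - 1 := by
  rw [RB, Nat.card_Icc]; omega

lemma LBRB_disj : Disjoint (LB n p q) (RB n) := by
  rw [disjoint_left]
  intro x hx hx2
  have h1 := mem_Icc.1 (mem_sdiff.1 hx).1
  have h2 := mem_Icc.1 hx2
  omega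

lemma FA_card (hn : 2 ≤ n) (hp1 : 1 ≤ p) (hpq : p ≤ q) (hq : q ≤ n - 1) :
    (FA n p q).card = (n-1).factorial := by
  rw [FA, card_image_of_injOn]
  · rw [pairings_card (n-1) _ _ (LARA_disj hn) (LA_card hn) (RA_card hn hp1 hpq hq)]
  · intro M1 hM1 M2 hM2 heq
    have hnotin : ∀ M0 ∈ pairings (LA n) (RA n p q), eA n p q ∉ M0 := by
      intro M0 hM0 hmem
      obtain ⟨a, ha, b, hb, habeq⟩ := (mem_pairings.1 hM0).1 _ hmem
      have hnp : n + p ∈ ({a, b} : Finset ℕ) := by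
        rw [← habeq, eA]; exact mem_insert_self _ _
      obtain ⟨ha1, ha2⟩ := memLA ha
      obtain ⟨hb1, hb2, hb3, hb4⟩ := memRA hb
      rcases mem_insert.1 hnp with rfl | h
      · omega
      · rw [mem_singleton] at h; omega
    simp only [mem_coe] at hM1 hM2
    have := congrArg (Finset.erase · (eA n p q)) heq
    simpa [erase_insert (hnotin _ hM1), erase_insert (hnotin _ hM2)] using this

lemma FB_card (hn : 2 ≤ n) (hq1 : 1 ≤ q) (hqp : q < p) (hp : p ≤ n - 1) :
    (FB n p q).card = (n-1).factorial := by
  rw [FB, card_image_of_injOn]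
  · rw [pairings_card (n-1) _ _ LBRB_disj (LB_card hn hq1 hqp hp) (RB_card hn)]
  · intro M1 hM1 M2 hM2 heq
    have hnotin : ∀ M0 ∈ pairings (LB n p q) (RB n), eB p q ∉ M0 := by
      intro M0 hM0 hmem
      obtain ⟨a, ha, b, hb, habeq⟩ := (mem_pairings.1 hM0).1 _ hmem
      have hpmem : p ∈ ({a, b} : Finset ℕ) := by
        rw [← habeq, eB]; exact mem_insert_of_mem (mem_singleton_self _)
      obtain ⟨⟨ha1, ha2⟩, ha3, ha4⟩ := memLB ha
      obtain ⟨hb1, hb2⟩ := memRB hb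
      rcases mem_insert.1 hpmem with rfl | h
      · exact ha4 rfl
      · rw [mem_singleton] at h; omega
    simp only [mem_coe] at hM1 hM2
    have := congrArg (Finset.erase · (eB p q)) heq
    simpa [erase_insert (hnotin _ hM1), erase_insert (hnotin _ hM2)] using this

lemma FA_props (hn : 2 ≤ n) (hp1 : 1 ≤ p) (hpq : p ≤ q) (hq : q ≤ n - 1)
    {M : Finset (Finset ℕ)} (hMF : M ∈ FA n p q) :
    IsRMatching 2 n M ∧ sockNum n M = n - 1 ∧ minsOf n M = shapeA n p ∧ eA n p q ∈ M := by
  obtain ⟨M0, hM0, rfl⟩ := mem_image.1 hMF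
  have hM0p := mem_pairings.1 hM0
  exact ⟨backA_matching hn hp1 hpq hq hM0p, backA_sock hn hp1 hpq hq hM0p,
    backA_mins hn hp1 hpq hq hM0p, mem_insert_self _ _⟩

lemma FB_props (hn : 2 ≤ n) (hq1 : 1 ≤ q) (hqp : q < p) (hp : p ≤ n - 1)
    {M : Finset (Finset ℕ)} (hMF : M ∈ FB n p q) :
    IsRMatching 2 n M ∧ sockNum n M = n - 1 ∧ minsOf n M = shapeB n p ∧ eB p q ∈ M := by
  obtain ⟨M0, hM0, rfl⟩ := mem_image.1 hMF
  have hM0p := mem_pairings.1 hM0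
  exact ⟨backB_matching hn hq1 hqp hp hM0p, backB_sock hn hq1 hqp hp hM0p,
    backB_mins hn hq1 hqp hp hM0p, mem_insert_self _ _⟩

lemma main_eq (hn : 2 ≤ n) :
    (matchings 2 n).filter (fun M => sockNum n M = n - 1) =
      ((Finset.Icc 1 (n-1)) ×ˢ (Finset.Icc 1 (n-1))).biUnion
        (fun pq => Fpq n pq.1 pq.2) := by
  ext M
  constructor
  · intro hM
    obtain ⟨hMm, hMs⟩ := mem_filter.1 hM
    have hMr := mem_matchings.1 hMm
    obtain ⟨p, q, h1, h2, h3, h4, hcase⟩ := forward hMr hn hMs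
    refine mem_biUnion.2 ⟨(p, q), mem_product.2 ⟨mem_Icc.2 ⟨h1, h2⟩, mem_Icc.2 ⟨h3, h4⟩⟩, ?_⟩
    rcases hcase with ⟨hpq, he, hpair⟩ | ⟨hqp, he, hpair⟩
    · rw [Fpq, if_pos hpq, FA]
      exact mem_image.2 ⟨M.erase (eA n p q), mem_pairings.2 hpair, insert_erase he⟩
    · rw [Fpq, if_neg (by omega), FB]
      exact mem_image.2 ⟨M.erase (eB p q), mem_pairings.2 hpair, insert_erase he⟩
  · intro hM
    obtain ⟨⟨p, q⟩, hpq, hMF⟩ := mem_biUnion.1 hM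
    obtain ⟨hp, hq⟩ := mem_product.1 hpq
    obtain ⟨hp1, hp2⟩ := mem_Icc.1 hp
    obtain ⟨hq1, hq2⟩ := mem_Icc.1 hq
    rw [Fpq] at hMF
    by_cases hc : p ≤ q
    · rw [if_pos hc] at hMF
      obtain ⟨hMr, hsock, _, _⟩ := FA_props hn hp1 hc hq2 hMF
      exact mem_filter.2 ⟨mem_matchings.2 hMr, hsock⟩
    · rw [if_neg hc] at hMF
      obtain ⟨hMr, hsock, _, _⟩ := FB_props hn hq1 (by omega) hp2 hMF
      exact mem_filter.2 ⟨mem_matchings.2 hMr, hsock⟩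

lemma shapeA_ne_shapeB (hn : 2 ≤ n) {p p' : ℕ} (hp1 : 1 ≤ p) (hp' : p' ≤ n - 1) :
    shapeA n p ≠ shapeB n p' := by
  intro h
  have hnB : n ∈ shapeB n p' := mem_erase.2 ⟨by omega, mem_Icc.2 ⟨by omega, by omega⟩⟩
  rw [← h] at hnB
  rcases mem_insert.1 hnB with h2 | h2
  · omega
  · have := mem_Icc.1 h2; omega

lemma F_disj (hn : 2 ≤ n) {p q p' q' : ℕ}
    (hp1 : 1 ≤ p) (hp2 : p ≤ n-1) (hq1 : 1 ≤ q) (hq2 : q ≤ n-1)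
    (hp1' : 1 ≤ p') (hp2' : p' ≤ n-1) (hq1' : 1 ≤ q') (hq2' : q' ≤ n-1)
    (hne : (p, q) ≠ (p', q')) : Disjoint (Fpq n p q) (Fpq n p' q') := by
  rw [disjoint_left]
  intro M hM1 hM2
  rw [Fpq] at hM1 hM2
  by_cases hc : p ≤ q <;> by_cases hc' : p' ≤ q'
  · rw [if_pos hc] at hM1; rw [if_pos hc'] at hM2
    obtain ⟨hMr, _, hmins, he⟩ := FA_props hn hp1 hc hq2 hM1
    obtain ⟨_, _, hmins', he'⟩ := FA_props hn hp1' hc' hq2' hM2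
    have hpp : p = p' := by
      have : n + p ∈ shapeA n p' := by
        rw [← hmins', hmins]; exact mem_insert_self _ _
      rcases mem_insert.1 this with h2 | h2
      · omega
      · have := mem_Icc.1 h2; omega
    subst hpp
    have heq : eA n p q = eA n p q' :=
      edge_unique hMr he he' (mem_insert_self _ _) (mem_insert_self _ _)
    have : n + q + 1 ∈ eA n p q' := by rw [← heq, eA]; exact mem_insert_of_mem (mem_singleton_self _)
    rw [eA] at this
    rcases mem_insert.1 this with h2 | h2
    · omega
    · rw [mem_singleton] at h2
      exact hne (by rw [Prod.mk.injEq]; omega)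
  · rw [if_pos hc] at hM1; rw [if_neg hc'] at hM2
    obtain ⟨_, _, hmins, _⟩ := FA_props hn hp1 hc hq2 hM1
    obtain ⟨_, _, hmins', _⟩ := FB_props hn hq1' (by omega) hp2' hM2
    exact shapeA_ne_shapeB hn hp1 hp2' (hmins.symm.trans hmins')
  · rw [if_neg hc] at hM1; rw [if_pos hc'] at hM2
    obtain ⟨_, _, hmins, _⟩ := FB_props hn hq1 (by omega) hp2 hM1
    obtain ⟨_, _, hmins', _⟩ := FA_props hn hp1' hc' hq2' hM2
    exact shapeA_ne_shapeB hn hp1' hp2 (hmins'.symm.trans hmins)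
  · rw [if_neg hc] at hM1; rw [if_neg hc'] at hM2
    obtain ⟨hMr, _, hmins, he⟩ := FB_props hn hq1 (by omega) hp2 hM1
    obtain ⟨_, _, hmins', he'⟩ := FB_props hn hq1' (by omega) hp2' hM2
    have hpp : p = p' := by
      by_contra hppne
      have h1 : p ∈ shapeB n p' := mem_erase.2 ⟨hppne, mem_Icc.2 ⟨by omega, by omega⟩⟩
      rw [← hmins', hmins, shapeB] at h1
      exact notMem_erase _ _ h1
    subst hpp
    have heq : eB p q = eB p q' := edge_unique hMr he he'
      (mem_insert_of_mem (mem_singleton_self _)) (mem_insert_of_mem (mem_singleton_self _))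
    have : q ∈ eB p q' := by rw [← heq, eB]; exact mem_insert_self _ _
    rw [eB] at this
    rcases mem_insert.1 this with h2 | h2
    · exact hne (by rw [Prod.mk.injEq]; omega)
    · rw [mem_singleton] at h2; omega

end Final

theorem stmt19 (n : ℕ) (hn : 1 ≤ n) :
    ((matchings 2 n).filter (fun M => sockNum n M = n - 1)).card =
      (n - 1) ^ 2 * (n - 1).factorial := by
  rcases Nat.lt_or_ge n 2 with h1 | h2
  · -- n = 1
    have hn1 : n = 1 := by omega
    subst hn1
    have hz : ((1:ℕ)-1)^2 * ((1:ℕ)-1).factorial = 0 := by norm_num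
    rw [hz, Finset.card_eq_zero, Finset.filter_eq_empty_iff]
    intro M hMm
    have hMr := mem_matchings.1 hMm
    intro hs
    have h1Icc : (1:ℕ) ∈ Finset.Icc 1 (2*1) := mem_Icc.2 ⟨le_refl _, by omega⟩
    obtain ⟨e, he, h1e⟩ := exists_edge hMr h1Icc
    obtain ⟨a, b, hab, rfl⟩ := edge_pair hMr he
    have hbIcc := mem_Icc.1 (edge_subset hMr he (mem_insert_of_mem (mem_singleton_self _)))
    have haIcc := mem_Icc.1 (edge_subset hMr he (mem_insert_self _ _))
    have hcr : 1 ≤ crossAt 1 M := by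
      rw [crossAt]
      refine Finset.card_pos.2 ⟨{a,b}, mem_filter.2 ⟨he,
        ⟨a, mem_inter.2 ⟨mem_insert_self _ _, mem_Icc.2 ⟨by omega, by omega⟩⟩⟩,
        ⟨b, mem_sdiff.2 ⟨mem_insert_of_mem (mem_singleton_self _), by simp [mem_Icc]; omega⟩⟩⟩⟩
    have hge : 1 ≤ sockNum 1 M := le_trans hcr
      (Finset.le_sup (f := fun k => crossAt k M) (mem_Icc.2 ⟨le_refl _, by omega⟩))
    omega
  · rw [main_eq h2, card_biUnion]
    · have hsum : ∀ pq ∈ (Finset.Icc 1 (n-1)) ×ˢ (Finset.Icc 1 (n-1)),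
          (Fpq n pq.1 pq.2).card = (n-1).factorial := by
        rintro ⟨p, q⟩ hpq
        obtain ⟨hp, hq⟩ := mem_product.1 hpq
        obtain ⟨hp1, hp2⟩ := mem_Icc.1 hp
        obtain ⟨hq1, hq2⟩ := mem_Icc.1 hq
        rw [Fpq]
        by_cases hc : p ≤ q
        · rw [if_pos hc]; exact FA_card h2 hp1 hc hq2
        · rw [if_neg hc]; exact FB_card h2 hq1 (by omega) hp2
      rw [Finset.sum_congr rfl hsum, Finset.sum_const, card_product, Nat.card_Icc, smul_eq_mul]
      have h3 : n - 1 + 1 - 1 = n - 1 := by omega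
      rw [h3, pow_two]
    · rintro ⟨p, q⟩ hpq ⟨p', q'⟩ hpq' hne
      obtain ⟨hp, hq⟩ := mem_product.1 hpq
      obtain ⟨hp', hq'⟩ := mem_product.1 hpq'
      obtain ⟨hp1, hp2⟩ := mem_Icc.1 hp
      obtain ⟨hq1, hq2⟩ := mem_Icc.1 hq
      obtain ⟨hp1', hp2'⟩ := mem_Icc.1 hp'
      obtain ⟨hq1', hq2'⟩ := mem_Icc.1 hq'
      exact F_disj h2 hp1 hp2 hq1 hq2 hp1' hp2' hq1' hq2' (by simpa using hne)
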